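/- Leading-term comparison in the Eagon–Northcott lifting: with the lexicographic order τ on K[x_{i,j}] given by x_{i,j} > x_{l,k} iff i < l or (i = l and j < k), fix columns c_1 < ... < c_{n+1} ≤ m and a row index i ∈ [n]. For a generic matrix X, the initial term of x_{i,c_i}|c∖c_i| equals the initial term of x_{i,c_{i+1}}|c∖c_{i+1}| (up to sign), and for every j ∉ {i, i+1} the initial term of x_{i,c_j}|c∖c_j| is strictly smaller in τ than this common initial term. -/

import Mathlib

/-- `M >_τ N` for monomials in the variables `x_{i,j}`, given as exponent vectors:
with the variable order `x_{i,j} > x_{l,k}` iff `i < l` or (`i = l` and `j < k`),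
`M` is lexicographically larger iff at the largest variable with different exponents it
has the larger exponent. -/
def monGT {n m : ℕ} (M N : Fin n × Fin m → ℕ) : Prop :=
  ∃ p : Fin n × Fin m, N p < M p ∧
    ∀ q : Fin n × Fin m, (q.1 < p.1 ∨ (q.1 = p.1 ∧ q.2 < p.2)) → M q = N q

/-- The exponent vector of the τ-initial term of `x_{i, c j} · |c ∖ c j|`, where
`|c ∖ c j|` is the maximal minor of the generic matrix on the columns `c` with `c j`
deleted (its initial term is the main diagonal product). -/
def expEN {n m : ℕ} (c : Fin (n + 1) → Fin m) (i : Fin n) (j : Fin (n + 1)) :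
    Fin n × Fin m → ℕ :=
  fun q => (if q = (i, c j) then 1 else 0) +
    (Finset.univ.filter (fun a : Fin n => q = (a, c (j.succAbove a)))).card

lemma expEN_eq {n m : ℕ} (c : Fin (n + 1) → Fin m) (i : Fin n) (j : Fin (n + 1))
    (a : Fin n) (x : Fin m) :
    expEN c i j (a, x) = (if (a, x) = (i, c j) then 1 else 0) +
      (if x = c (j.succAbove a) then 1 else 0) := by
  unfold expEN
  congr 1
  have h : Finset.univ.filter (fun b : Fin n => (a, x) = (b, c (j.succAbove b))) =
      if x = c (j.succAbove a) then {a} else ∅ := by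
    split_ifs with h
    · ext b
      simp only [Finset.mem_filter, Finset.mem_univ, true_and, Finset.mem_singleton,
        Prod.ext_iff]
      constructor
      · rintro ⟨h1, _⟩; exact h1.symm
      · rintro rfl; exact ⟨rfl, h⟩
    · ext b
      simp only [Finset.mem_filter, Finset.mem_univ, true_and, Finset.notMem_empty,
        iff_false, Prod.ext_iff, not_and]
      rintro rfl h2
      exact h h2
  rw [h]
  split_ifs <;> simp

/-- Leading-term comparison in the Eagon–Northcott lifting: the initial terms of
`x_{i,c_i}|c∖c_i|` and `x_{i,c_{i+1}}|c∖c_{i+1}|` coincide (up to sign), and for every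
`j ∉ {i, i+1}` the initial term of `x_{i,c_j}|c∖c_j|` is strictly smaller in τ. -/
theorem stmt_16 {n m : ℕ} (c : Fin (n + 1) → Fin m) (hc : StrictMono c) (i : Fin n) :
    expEN c i i.castSucc = expEN c i i.succ ∧
    ∀ j : Fin (n + 1), j ≠ i.castSucc → j ≠ i.succ →
      monGT (expEN c i i.castSucc) (expEN c i j) := by
  constructor
  · funext q
    obtain ⟨a, x⟩ := q
    rw [expEN_eq, expEN_eq]
    by_cases ha : a = i
    · subst ha
      rw [Fin.succAbove_of_le_castSucc _ _ le_rfl,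
        Fin.succAbove_of_castSucc_lt _ _ (Fin.castSucc_lt_succ : a.castSucc < a.succ)]
      simp only [Prod.mk.injEq, true_and]
      exact Nat.add_comm _ _
    · have h1 : i.castSucc.succAbove a = i.succ.succAbove a := by
        rcases lt_or_gt_of_ne ha with h | h
        · rw [Fin.succAbove_of_castSucc_lt _ _ (Fin.castSucc_lt_castSucc_iff.mpr h),
            Fin.succAbove_of_castSucc_lt _ _
              (lt_trans (Fin.castSucc_lt_castSucc_iff.mpr h) (Fin.castSucc_lt_succ : i.castSucc < i.succ))]
        · rw [Fin.succAbove_of_le_castSucc _ _ (Fin.castSucc_le_castSucc_iff.mpr h.le),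
            Fin.succAbove_of_le_castSucc _ _ (Fin.succ_le_castSucc_iff.mpr h)]
      rw [h1]
      simp [Prod.ext_iff, ha]
  · intro j hj1 hj2
    rcases lt_trichotomy j i.castSucc with hlt | heq | hgt
    · -- Case j < i : witness at row a = j, column c j
      have hji : (j : ℕ) < (i : ℕ) := by simpa [Fin.lt_def] using hlt
      set a : Fin n := ⟨(j : ℕ), lt_trans hji i.isLt⟩ with ha_def
      have hca : a.castSucc = j := Fin.ext rfl
      have hai : a < i := by simpa [Fin.lt_def, ha_def] using hji
      have haine : a ≠ i := ne_of_lt hai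
      have hja : j < a.succ := by rw [Fin.lt_def]; simp [ha_def]
      refine ⟨(a, c j), ?_, ?_⟩
      · rw [expEN_eq, expEN_eq,
          Fin.succAbove_of_castSucc_lt _ _ (Fin.castSucc_lt_castSucc_iff.mpr hai),
          Fin.succAbove_of_le_castSucc _ _ (le_of_eq hca.symm), hca]
        have hne : c j ≠ c a.succ := ne_of_lt (hc hja)
        simp [Prod.ext_iff, haine, hne]
      · rintro ⟨b, y⟩ h
        simp only at h
        rw [expEN_eq, expEN_eq]
        rcases h with h | ⟨rfl, hy⟩
        · have hbi : b < i := lt_trans h hai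
          have hbj : b.castSucc < j := by
            rw [← hca]; exact Fin.castSucc_lt_castSucc_iff.mpr h
          rw [Fin.succAbove_of_castSucc_lt _ _ (Fin.castSucc_lt_castSucc_iff.mpr hbi),
            Fin.succAbove_of_castSucc_lt _ _ hbj]
          simp [Prod.ext_iff, ne_of_lt hbi]
        · rw [Fin.succAbove_of_castSucc_lt _ _ (Fin.castSucc_lt_castSucc_iff.mpr hai),
            Fin.succAbove_of_le_castSucc _ _ (le_of_eq hca.symm), hca]
          have hy1 : y ≠ c j := ne_of_lt hy
          have hy2 : y ≠ c a.succ := ne_of_lt (lt_trans hy (hc hja))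
          simp [Prod.ext_iff, haine, hy1, hy2]
    · exact absurd heq hj1
    · -- Case i + 1 < j : witness at row i, column c i.succ
      have hgt' : (i : ℕ) + 1 < (j : ℕ) := by
        have h1 : (i : ℕ) < (j : ℕ) := by simpa [Fin.lt_def] using hgt
        have h2 : (j : ℕ) ≠ (i : ℕ) + 1 := by
          intro h; exact hj2 (Fin.ext (by simp [h]))
        omega
      have hsj : i.succ < j := by simpa [Fin.lt_def] using hgt'
      refine ⟨(i, c i.succ), ?_, ?_⟩
      · rw [expEN_eq, expEN_eq, Fin.succAbove_of_le_castSucc _ _ le_rfl,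
          Fin.succAbove_of_castSucc_lt _ _ hgt]
        have h1 : c i.succ ≠ c i.castSucc := ne_of_gt (hc (Fin.castSucc_lt_succ : i.castSucc < i.succ))
        have h2 : c i.succ ≠ c j := ne_of_lt (hc hsj)
        simp [Prod.ext_iff, h1, h2]
      · rintro ⟨b, y⟩ h
        simp only at h
        rw [expEN_eq, expEN_eq]
        rcases h with h | ⟨rfl, hy⟩
        · have hbj : b.castSucc < j :=
            lt_trans (lt_trans (Fin.castSucc_lt_castSucc_iff.mpr h)
              (Fin.castSucc_lt_succ : i.castSucc < i.succ)) hsj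
          rw [Fin.succAbove_of_castSucc_lt _ _ (Fin.castSucc_lt_castSucc_iff.mpr h),
            Fin.succAbove_of_castSucc_lt _ _ hbj]
          simp [Prod.ext_iff, ne_of_lt h]
        · rw [Fin.succAbove_of_le_castSucc _ _ le_rfl,
            Fin.succAbove_of_castSucc_lt _ _ hgt]
          have h1 : y ≠ c j := ne_of_lt (lt_trans hy (hc hsj))
          have hy' : y ≠ c b.succ := ne_of_lt hy
          simp [Prod.ext_iff, h1, hy']
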